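/- Let C be an unmixed clutter without cycles of length 3 or 4. If e_1,…,e_g is a perfect matching of C of König type, then for every i the edge e_i has a free vertex, i.e., a vertex belonging to no edge of C other than e_i. -/

import Mathlib

set_option linter.unusedSectionVars false
set_option maxHeartbeats 1000000


variable {V : Type} [Fintype V] [DecidableEq V]

/-- A clutter: a family of finsets (edges), none of which contains another. -/
def IsClutter (E : Set (Finset V)) : Prop :=
  ∀ e ∈ E, ∀ f ∈ E, e ⊆ f → e = f

/-- A vertex cover: a set of vertices meeting every edge. -/
def IsVertexCover (E : Set (Finset V)) (C : Finset V) : Prop :=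
  ∀ e ∈ E, (e ∩ C).Nonempty

/-- A minimal vertex cover. -/
def IsMinimalVertexCover (E : Set (Finset V)) (C : Finset V) : Prop :=
  IsVertexCover E C ∧ ∀ D ⊂ C, ¬ IsVertexCover E D

/-- The covering number: minimum cardinality of a vertex cover. -/
noncomputable def coveringNumber (E : Set (Finset V)) : ℕ :=
  sInf {n : ℕ | ∃ C : Finset V, IsVertexCover E C ∧ C.card = n}

/-- Unmixed: all minimal vertex covers have the same cardinality. -/
def Unmixed (E : Set (Finset V)) : Prop :=
  ∀ C D : Finset V, IsMinimalVertexCover E C → IsMinimalVertexCover E D →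
    C.card = D.card

/-- A matching: a set of pairwise disjoint edges. -/
def IsMatching (E : Set (Finset V)) (M : Finset (Finset V)) : Prop :=
  ↑M ⊆ E ∧ (M : Set (Finset V)).Pairwise Disjoint

/-- The König property: the maximum size of a matching equals the covering number. -/
def HasKonigProperty (E : Set (Finset V)) : Prop :=
  (∃ M : Finset (Finset V), IsMatching E M ∧ M.card = coveringNumber E) ∧
  ∀ M : Finset (Finset V), IsMatching E M → M.card ≤ coveringNumber E

/-- A perfect matching of König type: pairwise disjoint edges `em 0, …, em (g-1)`
whose union is the whole vertex set, where `g` is the covering number. -/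
def IsPerfectMatchingKT (E : Set (Finset V)) {g : ℕ} (em : Fin g → Finset V) : Prop :=
  (∀ i, em i ∈ E) ∧ (∀ i j, i ≠ j → Disjoint (em i) (em j)) ∧
  (∀ x : V, ∃ i, x ∈ em i) ∧ g = coveringNumber E

/-- An independent set: contains no edge. -/
def IsIndependentSet (E : Set (Finset V)) (F : Finset V) : Prop :=
  ∀ e ∈ E, ¬ e ⊆ F

/-- A facet of the independence complex: a maximal independent set. -/
def IsFacet (E : Set (Finset V)) (F : Finset V) : Prop :=
  IsIndependentSet E F ∧ ∀ G : Finset V, IsIndependentSet E G → F ⊆ G → F = G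

/-- The set of facets of the independence complex of a clutter. -/
def cFacets (E : Set (Finset V)) : Set (Finset V) := {F | IsFacet E F}

/-- `F : Fin s → Finset V` is a shelling order of the family of facets `Fac`. -/
def IsShelling {s : ℕ} (Fac : Set (Finset V)) (F : Fin s → Finset V) : Prop :=
  Function.Injective F ∧ (∀ G : Finset V, G ∈ Fac ↔ ∃ i, F i = G) ∧
  ∀ i j : Fin s, i < j →
    ∃ v ∈ F j \ F i, ∃ l : Fin s, l < j ∧ F j \ F l = {v}

/-- A family of facets is shellable if it admits a shelling order. -/
def Shellable (Fac : Set (Finset V)) : Prop :=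
  ∃ (s : ℕ) (F : Fin s → Finset V), IsShelling Fac F

/-- A family of facets is pure if all its members have the same cardinality. -/
def PureFamily (Fac : Set (Finset V)) : Prop :=
  ∀ F ∈ Fac, ∀ G ∈ Fac, F.card = G.card

/-- Pure shellable: pure and shellable. -/
def PureShellable (Fac : Set (Finset V)) : Prop :=
  PureFamily Fac ∧ Shellable Fac

/-- A free vertex: a vertex belonging to exactly one edge. -/
def HasFreeVertex (E : Set (Finset V)) : Prop :=
  ∃ x : V, ∃ e ∈ E, x ∈ e ∧ ∀ f ∈ E, x ∈ f → f = e

/-- A cycle of length `r`: `r` distinct vertices and `r` distinct edges such that each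
of the vertices lies in exactly two of the edges and each of the edges contains exactly
two of the vertices. -/
def HasCycleOfLength (E : Set (Finset V)) (r : ℕ) : Prop :=
  ∃ (v : Fin r → V) (f : Fin r → Finset V),
    Function.Injective v ∧ Function.Injective f ∧ (∀ j, f j ∈ E) ∧
    (∀ i : Fin r, (Finset.univ.filter (fun j => v i ∈ f j)).card = 2) ∧
    (∀ j : Fin r, (Finset.univ.filter (fun i => v i ∈ f j)).card = 2)

/-- In an unmixed clutter without cycles of length 3 or 4, every edge of
a perfect matching of König type has a free vertex. -/

lemma helper3 (E : Set (Finset V)) (a b c : V) (p q r : Finset V)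
    (hpE : p ∈ E) (hqE : q ∈ E) (hrE : r ∈ E)
    (hap : a ∈ p) (haq : a ∈ q) (har : a ∉ r)
    (hbp : b ∉ p) (hbq : b ∈ q) (hbr : b ∈ r)
    (hcp : c ∈ p) (hcq : c ∉ q) (hcr : c ∈ r) :
    HasCycleOfLength E 3 := by
  refine ⟨![a, b, c], ![p, q, r], ?_, ?_, ?_, ?_, ?_⟩
  · intro x y hxy
    fin_cases x <;> fin_cases y <;> simp_all
  · intro x y hxy
    fin_cases x <;> fin_cases y <;> simp_all
  · intro j; fin_cases j <;> simp_all
  · intro i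
    fin_cases i
    · have : Finset.univ.filter (fun j => ![a,b,c] 0 ∈ ![p,q,r] j) = {0, 1} := by
        ext j; simp only [Finset.mem_filter, Finset.mem_univ, true_and]; fin_cases j <;> simp_all
      exact (congrArg Finset.card this).trans (by decide)
    · have : Finset.univ.filter (fun j => ![a,b,c] 1 ∈ ![p,q,r] j) = {1, 2} := by
        ext j; simp only [Finset.mem_filter, Finset.mem_univ, true_and]; fin_cases j <;> simp_all
      exact (congrArg Finset.card this).trans (by decide)
    · have : Finset.univ.filter (fun j => ![a,b,c] 2 ∈ ![p,q,r] j) = {0, 2} := by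
        ext j; simp only [Finset.mem_filter, Finset.mem_univ, true_and]; fin_cases j <;> simp_all
      exact (congrArg Finset.card this).trans (by decide)
  · intro j
    fin_cases j
    · have : Finset.univ.filter (fun i => ![a,b,c] i ∈ ![p,q,r] 0) = {0, 2} := by
        ext i; simp only [Finset.mem_filter, Finset.mem_univ, true_and]; fin_cases i <;> simp_all
      exact (congrArg Finset.card this).trans (by decide)
    · have : Finset.univ.filter (fun i => ![a,b,c] i ∈ ![p,q,r] 1) = {0, 1} := by
        ext i; simp only [Finset.mem_filter, Finset.mem_univ, true_and]; fin_cases i <;> simp_all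
      exact (congrArg Finset.card this).trans (by decide)
    · have : Finset.univ.filter (fun i => ![a,b,c] i ∈ ![p,q,r] 2) = {1, 2} := by
        ext i; simp only [Finset.mem_filter, Finset.mem_univ, true_and]; fin_cases i <;> simp_all
      exact (congrArg Finset.card this).trans (by decide)

lemma helper4 (E : Set (Finset V)) (a b c d : V) (p q r s : Finset V)
    (hpE : p ∈ E) (hqE : q ∈ E) (hrE : r ∈ E) (hsE : s ∈ E)
    (hap : a ∈ p) (haq : a ∈ q) (har : a ∉ r) (has : a ∉ s)
    (hbp : b ∉ p) (hbq : b ∈ q) (hbr : b ∈ r) (hbs : b ∉ s)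
    (hcp : c ∉ p) (hcq : c ∉ q) (hcr : c ∈ r) (hcs : c ∈ s)
    (hdp : d ∈ p) (hdq : d ∉ q) (hdr : d ∉ r) (hds : d ∈ s) :
    HasCycleOfLength E 4 := by
  refine ⟨![a, b, c, d], ![p, q, r, s], ?_, ?_, ?_, ?_, ?_⟩
  · intro x y hxy
    fin_cases x <;> fin_cases y <;> simp_all
  · intro x y hxy
    fin_cases x <;> fin_cases y <;> simp_all
  · intro j; fin_cases j <;> simp_all
  · intro i
    fin_cases i
    · have : Finset.univ.filter (fun j => ![a,b,c,d] 0 ∈ ![p,q,r,s] j) = {0, 1} := by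
        ext j; simp only [Finset.mem_filter, Finset.mem_univ, true_and]; fin_cases j <;> simp_all
      exact (congrArg Finset.card this).trans (by decide)
    · have : Finset.univ.filter (fun j => ![a,b,c,d] 1 ∈ ![p,q,r,s] j) = {1, 2} := by
        ext j; simp only [Finset.mem_filter, Finset.mem_univ, true_and]; fin_cases j <;> simp_all
      exact (congrArg Finset.card this).trans (by decide)
    · have : Finset.univ.filter (fun j => ![a,b,c,d] 2 ∈ ![p,q,r,s] j) = {2, 3} := by
        ext j; simp only [Finset.mem_filter, Finset.mem_univ, true_and]; fin_cases j <;> simp_all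
      exact (congrArg Finset.card this).trans (by decide)
    · have : Finset.univ.filter (fun j => ![a,b,c,d] 3 ∈ ![p,q,r,s] j) = {0, 3} := by
        ext j; simp only [Finset.mem_filter, Finset.mem_univ, true_and]; fin_cases j <;> simp_all
      exact (congrArg Finset.card this).trans (by decide)
  · intro j
    fin_cases j
    · have : Finset.univ.filter (fun i => ![a,b,c,d] i ∈ ![p,q,r,s] 0) = {0, 3} := by
        ext i; simp only [Finset.mem_filter, Finset.mem_univ, true_and]; fin_cases i <;> simp_all
      exact (congrArg Finset.card this).trans (by decide)
    · have : Finset.univ.filter (fun i => ![a,b,c,d] i ∈ ![p,q,r,s] 1) = {0, 1} := by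
        ext i; simp only [Finset.mem_filter, Finset.mem_univ, true_and]; fin_cases i <;> simp_all
      exact (congrArg Finset.card this).trans (by decide)
    · have : Finset.univ.filter (fun i => ![a,b,c,d] i ∈ ![p,q,r,s] 2) = {1, 2} := by
        ext i; simp only [Finset.mem_filter, Finset.mem_univ, true_and]; fin_cases i <;> simp_all
      exact (congrArg Finset.card this).trans (by decide)
    · have : Finset.univ.filter (fun i => ![a,b,c,d] i ∈ ![p,q,r,s] 3) = {2, 3} := by
        ext i; simp only [Finset.mem_filter, Finset.mem_univ, true_and]; fin_cases i <;> simp_all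
      exact (congrArg Finset.card this).trans (by decide)

theorem matching_edges_have_free_vertex
    (E : Set (Finset V)) (hclut : IsClutter E) (hunmixed : Unmixed E)
    (h3 : ¬ HasCycleOfLength E 3) (h4 : ¬ HasCycleOfLength E 4)
    {g : ℕ} (em : Fin g → Finset V) (hpm : IsPerfectMatchingKT E em) :
    ∀ i : Fin g, ∃ x ∈ em i, ∀ f ∈ E, x ∈ f → f = em i := by
  classical
  intro i
  by_contra hfreeN
  push_neg at hfreeN
  obtain ⟨hmemE, hdisj, hcovV, hgeq⟩ := hpm
  set e := em i with he
  have heE : e ∈ E := hmemE i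
  have hg1 : 1 ≤ g := i.pos
  -- covering number facts
  have hSne : {n : ℕ | ∃ C : Finset V, IsVertexCover E C ∧ C.card = n}.Nonempty := by
    by_contra hc
    rw [Set.not_nonempty_iff_eq_empty] at hc
    have h0 : coveringNumber E = 0 := by
      rw [coveringNumber, hc]; exact Nat.sInf_empty
    omega
  obtain ⟨C0, hC0cov, hC0card⟩ : ∃ C : Finset V, IsVertexCover E C ∧ C.card = g := by
    obtain ⟨C, h1, h2⟩ := Nat.sInf_mem hSne
    exact ⟨C, h1, by rw [hgeq]; exact h2⟩
  have hcovle : ∀ D : Finset V, IsVertexCover E D → g ≤ D.card := by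
    intro D hD
    rw [hgeq]
    exact Nat.sInf_le ⟨D, hD, rfl⟩
  have hmincard : ∀ C : Finset V, IsMinimalVertexCover E C → C.card = g := by
    intro C hC
    have hC0min : IsMinimalVertexCover E C0 := by
      refine ⟨hC0cov, ?_⟩
      intro D hD hDcov
      have h1 : g ≤ D.card := hcovle D hDcov
      have h2 : D.card < C0.card := Finset.card_lt_card hD
      omega
    rw [hunmixed C C0 hC hC0min, hC0card]
  have heNe : e.Nonempty := by
    obtain ⟨y, hy⟩ := hC0cov e heE
    exact ⟨y, (Finset.mem_inter.mp hy).1⟩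
  -- Claim 1: two vertices of e with "private" edges
  obtain ⟨x1, x2, f1, f2, hx1e, hx2e, hf1E, hf2E, hx1f1, hx2f2, hx1f2, hx2f1⟩ :
      ∃ x1 x2 : V, ∃ f1 f2 : Finset V, x1 ∈ e ∧ x2 ∈ e ∧ f1 ∈ E ∧ f2 ∈ E ∧
        x1 ∈ f1 ∧ x2 ∈ f2 ∧ x1 ∉ f2 ∧ x2 ∉ f1 := by
    by_contra hP
    push_neg at hP
    have key : ∀ n : ℕ, n ≤ e.card → ∃ k ∈ E, k ≠ e ∧ n ≤ (e ∩ k).card := by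
      intro n
      induction n with
      | zero =>
        intro _
        obtain ⟨x, hx⟩ := heNe
        obtain ⟨f, hfE, hxf, hfne⟩ := hfreeN x hx
        exact ⟨f, hfE, hfne, Nat.zero_le _⟩
      | succ n ih =>
        intro hn
        obtain ⟨k, hkE, hkne, hkcard⟩ := ih (le_trans (Nat.le_succ n) hn)
        by_cases hc : n + 1 ≤ (e ∩ k).card
        · exact ⟨k, hkE, hkne, hc⟩
        · have hek : ∃ x, x ∈ e ∧ x ∉ k := by
            by_contra hek
            push_neg at hek
            have hsub : e ∩ k = e := Finset.inter_eq_left.mpr (fun x hx => hek x hx)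
            rw [hsub] at hc
            exact hc hn
          obtain ⟨z, hze, hzk⟩ := hek
          obtain ⟨f', hf'E, hzf', hf'ne⟩ := hfreeN z hze
          have hsub : insert z (e ∩ k) ⊆ e ∩ f' := by
            intro y hy
            rcases Finset.mem_insert.mp hy with rfl | hy
            · exact Finset.mem_inter.mpr ⟨hze, hzf'⟩
            · have hye := (Finset.mem_inter.mp hy).1
              have hyk := (Finset.mem_inter.mp hy).2
              have := hP z y f' k hze hye hf'E hkE hzf' hyk hzk
              exact Finset.mem_inter.mpr ⟨hye, this⟩
          have hcard : n + 1 ≤ (insert z (e ∩ k)).card := by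
            rw [Finset.card_insert_of_notMem (fun h => hzk (Finset.mem_inter.mp h).2)]
            omega
          exact ⟨f', hf'E, hf'ne, le_trans hcard (Finset.card_le_card hsub)⟩
    obtain ⟨k, hkE, hkne, hkcard⟩ := key e.card le_rfl
    have h1 : e ∩ k = e := Finset.eq_of_subset_of_card_le Finset.inter_subset_left hkcard
    have h2 : e ⊆ k := by rw [← h1]; exact Finset.inter_subset_right
    exact hkne (hclut e heE k hkE h2).symm
  have hx1x2 : x1 ≠ x2 := fun h => hx2f1 (h ▸ hx1f1)
  have hf1e : f1 ≠ e := fun h => hx2f1 (h ▸ hx2e)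
  have hf2e : f2 ≠ e := fun h => hx1f2 (h ▸ hx1e)
  -- no common vertex of f1, f2 outside e (else 3-cycle)
  have hO1 : ∀ z, z ∈ f1 → z ∈ f2 → z ∈ e := by
    intro z hz1 hz2
    by_contra hze
    exact h3 (helper3 E x1 z x2 e f1 f2 heE hf1E hf2E hx1e hx1f1 hx1f2 hze hz1 hz2
      hx2e hx2f1 hx2f2)
  -- the independent set T
  set T : Finset V := ((e \ {x1, x2}) ∪ (f1 \ {x1})) ∪ (f2 \ {x2}) with hTdef
  have hf1T : f1 \ {x1} ⊆ T := by
    intro y hy; exact Finset.mem_union.mpr (Or.inl (Finset.mem_union.mpr (Or.inr hy)))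
  have hf2T : f2 \ {x2} ⊆ T := fun y hy => Finset.mem_union.mpr (Or.inr hy)
  have hx1T : x1 ∉ T := by
    intro h
    rcases Finset.mem_union.mp h with h | h
    · rcases Finset.mem_union.mp h with h | h
      · exact (Finset.mem_sdiff.mp h).2 (Finset.mem_insert_self _ _)
      · exact (Finset.mem_sdiff.mp h).2 (Finset.mem_singleton_self _)
    · exact hx1f2 (Finset.mem_sdiff.mp h).1
  have hx2T : x2 ∉ T := by
    intro h
    rcases Finset.mem_union.mp h with h | h
    · rcases Finset.mem_union.mp h with h | h
      · exact (Finset.mem_sdiff.mp h).2 (Finset.mem_insert_of_mem (Finset.mem_singleton_self _))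
      · exact hx2f1 (Finset.mem_sdiff.mp h).1
    · exact (Finset.mem_sdiff.mp h).2 (Finset.mem_singleton_self _)
  have hTsub : T ⊆ (e ∪ f1) ∪ f2 := by
    intro y hy
    rcases Finset.mem_union.mp hy with h | h
    · rcases Finset.mem_union.mp h with h | h
      · exact Finset.mem_union.mpr (Or.inl (Finset.mem_union.mpr (Or.inl (Finset.mem_sdiff.mp h).1)))
      · exact Finset.mem_union.mpr (Or.inl (Finset.mem_union.mpr (Or.inr (Finset.mem_sdiff.mp h).1)))
    · exact Finset.mem_union.mpr (Or.inr (Finset.mem_sdiff.mp h).1)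
  -- T is independent
  have hTind : IsIndependentSet E T := by
    intro h hhE hhT
    have hx1h : x1 ∉ h := fun hx => hx1T (hhT hx)
    have hx2h : x2 ∉ h := fun hx => hx2T (hhT hx)
    have hhe : h ≠ e := fun heq => hx1h (heq ▸ hx1e)
    have hhsub : h ⊆ (e ∪ f1) ∪ f2 := fun y hy => hTsub (hhT hy)
    have hhne : ¬ h ⊆ e := fun hsub' => hhe (hclut h hhE e heE hsub')
    by_cases hcase1 : ∃ u, u ∈ h ∧ u ∈ f1 ∧ u ∉ e
    · by_cases hcase2 : ∃ w, w ∈ h ∧ w ∈ f2 ∧ w ∉ e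
      · obtain ⟨u, huh, huf1, hue⟩ := hcase1
        obtain ⟨w, hwh, hwf2, hwe⟩ := hcase2
        have huf2 : u ∉ f2 := fun hu => hue (hO1 u huf1 hu)
        have hwf1 : w ∉ f1 := fun hw => hwe (hO1 w hw hwf2)
        exact h4 (helper4 E x1 u w x2 e f1 h f2 heE hf1E hhE hf2E
          hx1e hx1f1 hx1h hx1f2
          hue huf1 huh huf2
          hwe hwf1 hwh hwf2
          hx2e hx2f1 hx2h hx2f2)
      · obtain ⟨u, huh, huf1, hue⟩ := hcase1
        have hhf1 : h ≠ f1 := fun heq => hx1h (heq ▸ hx1f1)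
        have hhnf1 : ¬ h ⊆ f1 := fun hsub' => hhf1 (hclut h hhE f1 hf1E hsub')
        obtain ⟨y, hyh, hyf1⟩ := Finset.not_subset.mp hhnf1
        have hye : y ∈ e := by
          by_contra hye
          rcases Finset.mem_union.mp (hhsub hyh) with hy | hy
          · rcases Finset.mem_union.mp hy with hy | hy
            · exact hye hy
            · exact hyf1 hy
          · exact hcase2 ⟨y, hyh, hy, hye⟩
        exact h3 (helper3 E x1 u y e f1 h heE hf1E hhE
          hx1e hx1f1 hx1h hue huf1 huh hye hyf1 hyh)
    · obtain ⟨u0, hu0h, hu0e⟩ := Finset.not_subset.mp hhne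
      have hu0f2 : u0 ∈ f2 := by
        rcases Finset.mem_union.mp (hhsub hu0h) with hy | hy
        · rcases Finset.mem_union.mp hy with hy | hy
          · exact absurd hy hu0e
          · exact absurd ⟨u0, hu0h, hy, hu0e⟩ hcase1
        · exact hy
      have hhf2 : h ≠ f2 := fun heq => hx2h (heq ▸ hx2f2)
      have hhnf2 : ¬ h ⊆ f2 := fun hsub' => hhf2 (hclut h hhE f2 hf2E hsub')
      obtain ⟨y, hyh, hyf2⟩ := Finset.not_subset.mp hhnf2
      have hye : y ∈ e := by
        by_contra hye
        rcases Finset.mem_union.mp (hhsub hyh) with hy | hy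
        · rcases Finset.mem_union.mp hy with hy | hy
          · exact hye hy
          · exact hcase1 ⟨y, hyh, hy, hye⟩
        · exact hyf2 hy
      exact h3 (helper3 E x2 u0 y e f2 h heE hf2E hhE
        hx2e hx2f2 hx2h hu0e hu0f2 hu0h hye hyf2 hyh)
  -- extend T to a maximal independent set F
  have h𝒮ne : (Finset.univ.powerset.filter
      (fun G : Finset V => IsIndependentSet E G ∧ T ⊆ G)).Nonempty :=
    ⟨T, Finset.mem_filter.mpr ⟨Finset.mem_powerset.mpr (Finset.subset_univ T),
      hTind, le_refl T⟩⟩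
  obtain ⟨F, hF𝒮, hFge⟩ := Finset.exists_max_image _ (fun G : Finset V => G.card) h𝒮ne
  obtain ⟨-, hFind, hTF⟩ := Finset.mem_filter.mp hF𝒮
  have hFmax : ∀ G : Finset V, IsIndependentSet E G → F ⊆ G → F = G := by
    intro G hGind hFG
    refine Finset.eq_of_subset_of_card_le hFG ?_
    exact hFge G (Finset.mem_filter.mpr ⟨Finset.mem_powerset.mpr (Finset.subset_univ G),
      hGind, hTF.trans hFG⟩)
  have hx1F : x1 ∉ F := by
    intro hx
    refine hFind f1 hf1E ?_
    intro y hy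
    rcases eq_or_ne y x1 with rfl | hne
    · exact hx
    · exact hTF (hf1T (Finset.mem_sdiff.mpr ⟨hy, fun hm => hne (Finset.mem_singleton.mp hm)⟩))
  have hx2F : x2 ∉ F := by
    intro hx
    refine hFind f2 hf2E ?_
    intro y hy
    rcases eq_or_ne y x2 with rfl | hne
    · exact hx
    · exact hTF (hf2T (Finset.mem_sdiff.mpr ⟨hy, fun hm => hne (Finset.mem_singleton.mp hm)⟩))
  -- the complement of F is a minimal vertex cover
  set C : Finset V := Finset.univ \ F with hCdef
  have hCcov : IsVertexCover E C := by
    intro h hhE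
    by_contra hemp
    rw [Finset.not_nonempty_iff_eq_empty] at hemp
    refine hFind h hhE ?_
    intro y hy
    by_contra hyF
    have hyC : y ∈ C := Finset.mem_sdiff.mpr ⟨Finset.mem_univ y, hyF⟩
    have : y ∈ h ∩ C := Finset.mem_inter.mpr ⟨hy, hyC⟩
    rw [hemp] at this
    exact absurd this (Finset.notMem_empty y)
  have hCmin : IsMinimalVertexCover E C := by
    refine ⟨hCcov, ?_⟩
    intro D hD hDcov
    have hFG : F ⊆ Finset.univ \ D := by
      intro y hy
      refine Finset.mem_sdiff.mpr ⟨Finset.mem_univ y, fun hyD => ?_⟩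
      have : y ∈ C := hD.1 hyD
      exact (Finset.mem_sdiff.mp this).2 hy
    have hGind : IsIndependentSet E (Finset.univ \ D) := by
      intro h hhE hsub
      obtain ⟨y, hy⟩ := hDcov h hhE
      obtain ⟨hyh, hyD⟩ := Finset.mem_inter.mp hy
      exact (Finset.mem_sdiff.mp (hsub hyh)).2 hyD
    have hFeq : F = Finset.univ \ D := hFmax _ hGind hFG
    have hCD : C = D := by
      rw [hCdef, hFeq, Finset.sdiff_sdiff_self_left, Finset.univ_inter]
    exact (Finset.ssubset_iff_subset_ne.mp hD).2 hCD.symm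
  have hCg : C.card = g := hmincard C hCmin
  -- counting: C meets each matching edge exactly once
  have hCeq : C = Finset.univ.biUnion (fun j => C ∩ em j) := by
    ext x
    simp only [Finset.mem_biUnion, Finset.mem_inter, Finset.mem_univ, true_and]
    constructor
    · intro hx
      obtain ⟨j, hj⟩ := hcovV x
      exact ⟨j, hx, hj⟩
    · rintro ⟨j, hx, -⟩
      exact hx
  have hsum : ∑ j, (C ∩ em j).card = g := by
    rw [← Finset.card_biUnion, ← hCeq, hCg]
    intro a _ b _ hab
    exact ((hdisj a b hab).mono Finset.inter_subset_right Finset.inter_subset_right)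
  have hone : ∀ j, 1 ≤ (C ∩ em j).card := by
    intro j
    obtain ⟨y, hy⟩ := hCcov (em j) (hmemE j)
    obtain ⟨hy1, hy2⟩ := Finset.mem_inter.mp hy
    exact Finset.card_pos.mpr ⟨y, Finset.mem_inter.mpr ⟨hy2, hy1⟩⟩
  have h2le : 2 ≤ (C ∩ em i).card := by
    have hsub : ({x1, x2} : Finset V) ⊆ C ∩ em i := by
      intro y hy
      rcases Finset.mem_insert.mp hy with rfl | hy
      · exact Finset.mem_inter.mpr ⟨Finset.mem_sdiff.mpr ⟨Finset.mem_univ _, hx1F⟩, hx1e⟩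
      · rw [Finset.mem_singleton.mp hy]
        exact Finset.mem_inter.mpr ⟨Finset.mem_sdiff.mpr ⟨Finset.mem_univ _, hx2F⟩, hx2e⟩
    calc 2 = ({x1, x2} : Finset V).card := by
            rw [Finset.card_insert_of_notMem (fun h => hx1x2 (Finset.mem_singleton.mp h)),
              Finset.card_singleton]
      _ ≤ (C ∩ em i).card := Finset.card_le_card hsub
  have hsplit : (C ∩ em i).card + ∑ j ∈ Finset.univ.erase i, (C ∩ em j).card = g :=
    (Finset.add_sum_erase (Finset.univ : Finset (Fin g)) (fun j => (C ∩ em j).card)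
      (Finset.mem_univ i)).trans hsum
  have hrest : (Finset.univ : Finset (Fin g)).card - 1 ≤
      ∑ j ∈ Finset.univ.erase i, (C ∩ em j).card := by
    calc (Finset.univ : Finset (Fin g)).card - 1 = (Finset.univ.erase i).card := by
          rw [Finset.card_erase_of_mem (Finset.mem_univ i)]
      _ = ∑ j ∈ Finset.univ.erase i, 1 := by rw [Finset.card_eq_sum_ones]
      _ ≤ _ := Finset.sum_le_sum (fun j _ => hone j)
  have huniv : (Finset.univ : Finset (Fin g)).card = g := by
    rw [Finset.card_univ, Fintype.card_fin]
  omega
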